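/- Let p = (p1, p2) and q = (q1, q2) be points in the plane and let r = (r1, r2) be chosen uniformly at random from [0, 1/2) x [0, 1/2). Assign a point x = (x1, x2) to the grid cell (floor(2(x1 + r1)), floor(2(x2 + r2))). Then the probability that p and q are assigned to different grid cells is at most 2(|p1 - q1| + |p2 - q2|). -/
import Mathlib


open scoped ENNReal

open MeasureTheory

lemma oneD_aux (a b : ℝ) (hab : a ≤ b) :
    volume ({r : ℝ | ⌊2 * (a + r)⌋ ≠ ⌊2 * (b + r)⌋} ∩ Set.Ico 0 (1 / 2))
      ≤ ENNReal.ofReal (b - a) := by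
  by_cases h : (1 : ℝ) / 2 ≤ b - a
  · calc volume ({r : ℝ | ⌊2 * (a + r)⌋ ≠ ⌊2 * (b + r)⌋} ∩ Set.Ico 0 (1 / 2))
        ≤ volume (Set.Ico (0 : ℝ) (1 / 2)) := measure_mono Set.inter_subset_right
      _ = ENNReal.ofReal (1 / 2 - 0) := Real.volume_Ico
      _ ≤ ENNReal.ofReal (b - a) := ENNReal.ofReal_le_ofReal (by linarith)
  · push_neg at h
    set t := Int.fract (2 * b) with ht
    have ht0 : 0 ≤ t := Int.fract_nonneg _
    have ht1 : t < 1 := Int.fract_lt_one _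
    have hsub : {r : ℝ | ⌊2 * (a + r)⌋ ≠ ⌊2 * (b + r)⌋} ∩ Set.Ico 0 (1 / 2)
        ⊆ Set.Ico (0 : ℝ) ((2 * (b - a) - t) / 2) ∪
          Set.Ico ((1 - t) / 2) (min (1 / 2) ((1 + 2 * (b - a) - t) / 2)) := by
      rintro r ⟨hne, hr0, hr1⟩
      have hlt : ⌊2 * (a + r)⌋ < ⌊2 * (b + r)⌋ :=
        lt_of_le_of_ne (Int.floor_le_floor (by linarith)) hne
      have h1 : (⌊2 * (a + r)⌋ : ℝ) + 1 ≤ (⌊2 * (b + r)⌋ : ℝ) := by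
        exact_mod_cast Int.add_one_le_iff.mpr hlt
      have h2 : 2 * (a + r) < (⌊2 * (b + r)⌋ : ℝ) :=
        lt_of_lt_of_le (Int.lt_floor_add_one _) h1
      have hfra : Int.fract (2 * (b + r)) < 2 * (b - a) := by
        have hd : Int.fract (2 * (b + r)) = 2 * (b + r) - ⌊2 * (b + r)⌋ := rfl
        have hfl : (⌊2 * (b + r)⌋ : ℝ) ≤ 2 * (b + r) := Int.floor_le _
        linarith
      have heq : Int.fract (2 * (b + r)) = Int.fract (t + 2 * r) := by
        have : 2 * (b + r) = (⌊2 * b⌋ : ℝ) + (t + 2 * r) := by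
          have : t = 2 * b - ⌊2 * b⌋ := rfl
          linarith
        rw [this, Int.fract_intCast_add]
      rw [heq] at hfra
      by_cases hc : t + 2 * r < 1
      · have : Int.fract (t + 2 * r) = t + 2 * r :=
          Int.fract_eq_self.mpr ⟨by linarith, hc⟩
        rw [this] at hfra
        exact Or.inl ⟨hr0, by linarith⟩
      · push_neg at hc
        have h3 : Int.fract (t + 2 * r) = t + 2 * r - 1 := by
          have : Int.fract (t + 2 * r - 1) = t + 2 * r - 1 :=
            Int.fract_eq_self.mpr ⟨by linarith, by linarith⟩
          calc Int.fract (t + 2 * r) = Int.fract (t + 2 * r - 1 + 1) := by ring_nf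
            _ = Int.fract (t + 2 * r - 1) := by
                rw [show (1 : ℝ) = ((1 : ℤ) : ℝ) by norm_num, Int.fract_add_intCast]
            _ = t + 2 * r - 1 := this
        rw [h3] at hfra
        exact Or.inr ⟨by linarith, lt_min (by linarith) (by linarith)⟩
    calc volume ({r : ℝ | ⌊2 * (a + r)⌋ ≠ ⌊2 * (b + r)⌋} ∩ Set.Ico 0 (1 / 2))
        ≤ volume (Set.Ico (0 : ℝ) ((2 * (b - a) - t) / 2)) +
          volume (Set.Ico ((1 - t) / 2) (min (1 / 2) ((1 + 2 * (b - a) - t) / 2))) :=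
          (measure_mono hsub).trans (measure_union_le _ _)
      _ = ENNReal.ofReal ((2 * (b - a) - t) / 2 - 0) +
          ENNReal.ofReal (min (1 / 2) ((1 + 2 * (b - a) - t) / 2) - (1 - t) / 2) := by
          rw [Real.volume_Ico, Real.volume_Ico]
      _ ≤ ENNReal.ofReal (b - a) := by
          rcases le_total t (2 * (b - a)) with hc | hc
          · rw [min_eq_left (by linarith)]
            rw [← ENNReal.ofReal_add (by linarith) (by linarith)]
            exact ENNReal.ofReal_le_ofReal (by linarith)
          · rw [min_eq_right (by linarith)]
            have hz : ENNReal.ofReal ((2 * (b - a) - t) / 2 - 0) = 0 :=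
              ENNReal.ofReal_eq_zero.mpr (by linarith)
            rw [hz, zero_add]
            exact ENNReal.ofReal_le_ofReal (by linarith)

lemma oneD (a b : ℝ) :
    volume ({r : ℝ | ⌊2 * (a + r)⌋ ≠ ⌊2 * (b + r)⌋} ∩ Set.Ico 0 (1 / 2))
      ≤ ENNReal.ofReal |a - b| := by
  rcases le_total a b with hab | hab
  · rw [abs_sub_comm, abs_of_nonneg (sub_nonneg.mpr hab)]
    exact oneD_aux a b hab
  · rw [abs_of_nonneg (sub_nonneg.mpr hab)]
    have : {r : ℝ | ⌊2 * (a + r)⌋ ≠ ⌊2 * (b + r)⌋} =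
        {r : ℝ | ⌊2 * (b + r)⌋ ≠ ⌊2 * (a + r)⌋} := by
      ext r; simp [ne_comm]
    rw [this]
    exact oneD_aux b a hab

/-- For a uniformly random offset `r ∈ [0,1/2) × [0,1/2)`, the probability that two
points `p, q` of the plane land in different cells of the shifted grid of cell size
`1/2` is at most `2 (|p₁ - q₁| + |p₂ - q₂|)`. -/
theorem prob_separated_by_random_grid
    (p q : ℝ × ℝ) :
    ((4 : ℝ≥0∞) •
        (volume.restrict ((Set.Ico (0 : ℝ) (1 / 2)) ×ˢ (Set.Ico (0 : ℝ) (1 / 2)))))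
        {r : ℝ × ℝ | ⌊2 * (p.1 + r.1)⌋ ≠ ⌊2 * (q.1 + r.1)⌋ ∨
          ⌊2 * (p.2 + r.2)⌋ ≠ ⌊2 * (q.2 + r.2)⌋}
      ≤ ENNReal.ofReal (2 * (|p.1 - q.1| + |p.2 - q.2|)) := by
  set I : Set ℝ := Set.Ico (0 : ℝ) (1 / 2) with hIdef
  set A₁ : Set ℝ := {x : ℝ | ⌊2 * (p.1 + x)⌋ ≠ ⌊2 * (q.1 + x)⌋} with hA₁
  set A₂ : Set ℝ := {x : ℝ | ⌊2 * (p.2 + x)⌋ ≠ ⌊2 * (q.2 + x)⌋} with hA₂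
  have hIvol : volume I = ENNReal.ofReal (1 / 2) := by
    rw [hIdef, Real.volume_Ico]; norm_num
  have hprod : ∀ s tt : Set ℝ,
      (volume.restrict (I ×ˢ I)) (s ×ˢ tt) = volume (s ∩ I) * volume (tt ∩ I) := by
    intro s tt
    rw [Measure.volume_eq_prod, ← Measure.prod_restrict,
      Measure.prod_prod, Measure.restrict_apply' measurableSet_Ico,
      Measure.restrict_apply' measurableSet_Ico]
  have hsub : {r : ℝ × ℝ | ⌊2 * (p.1 + r.1)⌋ ≠ ⌊2 * (q.1 + r.1)⌋ ∨
        ⌊2 * (p.2 + r.2)⌋ ≠ ⌊2 * (q.2 + r.2)⌋} ⊆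
      (A₁ ×ˢ (Set.univ : Set ℝ)) ∪ ((Set.univ : Set ℝ) ×ˢ A₂) := by
    rintro ⟨x, y⟩ (hx | hy)
    · exact Or.inl ⟨hx, trivial⟩
    · exact Or.inr ⟨trivial, hy⟩
  have h1 := oneD p.1 q.1
  have h2 := oneD p.2 q.2
  calc ((4 : ℝ≥0∞) • (volume.restrict (I ×ˢ I)))
        {r : ℝ × ℝ | ⌊2 * (p.1 + r.1)⌋ ≠ ⌊2 * (q.1 + r.1)⌋ ∨
          ⌊2 * (p.2 + r.2)⌋ ≠ ⌊2 * (q.2 + r.2)⌋}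
      ≤ (4 : ℝ≥0∞) * ((volume.restrict (I ×ˢ I)) (A₁ ×ˢ (Set.univ : Set ℝ)) +
          (volume.restrict (I ×ˢ I)) ((Set.univ : Set ℝ) ×ˢ A₂)) := by
        rw [Measure.smul_apply, smul_eq_mul]
        exact mul_le_mul_right ((measure_mono hsub).trans (measure_union_le _ _)) _
    _ = (4 : ℝ≥0∞) * (volume (A₁ ∩ I) * ENNReal.ofReal (1 / 2) +
          ENNReal.ofReal (1 / 2) * volume (A₂ ∩ I)) := by
        rw [hprod, hprod, Set.univ_inter, hIvol]
    _ ≤ (4 : ℝ≥0∞) * (ENNReal.ofReal |p.1 - q.1| * ENNReal.ofReal (1 / 2) +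
          ENNReal.ofReal (1 / 2) * ENNReal.ofReal |p.2 - q.2|) := by
        gcongr
    _ = ENNReal.ofReal (2 * (|p.1 - q.1| + |p.2 - q.2|)) := by
        rw [← ENNReal.ofReal_mul (by positivity), ← ENNReal.ofReal_mul (by norm_num),
          ← ENNReal.ofReal_add (by positivity) (by positivity),
          show ((4 : ℝ≥0∞) = ENNReal.ofReal 4) by norm_num,
          ← ENNReal.ofReal_mul (by norm_num)]
        congr 1
        ring
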